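/- If there exists a GDD(m,n;3,λ) with m,n ≥ 1, then λ/3 ≤ (m−1)/n + (n−1)/m, i.e., λmn ≤ 3n(n−1) + 3m(m−1). -/

import Mathlib

open Finset


/-- A `GDD(m, n; λ₁, λ₂)`: a collection `B` of 3-element blocks on the
`(m+n)`-set `Fin m ⊕ Fin n` (groups `Fin m` and `Fin n`) such that each pair
of distinct symbols from the same group lies in exactly `λ₁` blocks and each
pair of symbols from different groups lies in exactly `λ₂` blocks. -/
def IsGDD (m n lam1 lam2 : ℕ) (B : Multiset (Finset (Fin m ⊕ Fin n))) : Prop :=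
  (∀ b ∈ B, b.card = 3) ∧
  (∀ x y : Fin m ⊕ Fin n, x ≠ y → x.isLeft = y.isLeft →
    (B.filter (fun b => x ∈ b ∧ y ∈ b)).card = lam1) ∧
  (∀ x y : Fin m ⊕ Fin n, x.isLeft ≠ y.isLeft →
    (B.filter (fun b => x ∈ b ∧ y ∈ b)).card = lam2)

lemma swap_count {α V : Type*} [DecidableEq V] (B : Multiset (Finset V)) (S : Finset α)
    (Q : α → Finset V → Prop) [∀ a b, Decidable (Q a b)] :
    ∑ a ∈ S, (B.filter (Q a)).card = (B.map fun b => (S.filter (fun a => Q a b)).card).sum := by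
  induction B using Multiset.induction with
  | empty => simp
  | cons c B ih =>
    simp only [Multiset.filter_cons, Multiset.map_cons, Multiset.sum_cons, Multiset.card_add]
    rw [Finset.sum_add_distrib, ih, Finset.card_filter]
    congr 1
    apply Finset.sum_congr rfl
    intro a _
    split <;> simp

theorem stmt_2 (m n lam : ℕ) (hm : 1 ≤ m) (hn : 1 ≤ n)
    (h : ∃ B : Multiset (Finset (Fin m ⊕ Fin n)), IsGDD m n 3 lam B) :
    lam * m * n ≤ 3 * n * (n - 1) + 3 * m * (m - 1) := by
  classical
  obtain ⟨B, h3, hsame, hcross⟩ := h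
  set Lf : Finset (Fin m ⊕ Fin n) → ℕ :=
    fun b => (Finset.univ.filter fun x : Fin m => Sum.inl x ∈ b).card with hLf
  set Rf : Finset (Fin m ⊕ Fin n) → ℕ :=
    fun b => (Finset.univ.filter fun y : Fin n => Sum.inr y ∈ b).card with hRf
  -- cross count
  have hc : m * n * lam = (B.map fun b => Lf b * Rf b).sum := by
    have hs := swap_count B (Finset.univ : Finset (Fin m × Fin n))
      (fun p b => Sum.inl p.1 ∈ b ∧ Sum.inr p.2 ∈ b)
    have hl : ∀ p : Fin m × Fin n,
        (B.filter (fun b => Sum.inl p.1 ∈ b ∧ Sum.inr p.2 ∈ b)).card = lam := by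
      intro p
      exact hcross (Sum.inl p.1) (Sum.inr p.2) (by simp)
    rw [Finset.sum_congr rfl (fun p _ => hl p), Finset.sum_const, smul_eq_mul] at hs
    simp only [Finset.card_univ, Fintype.card_prod, Fintype.card_fin] at hs
    rw [hs]
    congr 1
    apply Multiset.map_congr rfl
    intro b _
    have : (Finset.univ.filter fun p : Fin m × Fin n => Sum.inl p.1 ∈ b ∧ Sum.inr p.2 ∈ b)
        = (Finset.univ.filter fun x : Fin m => Sum.inl x ∈ b) ×ˢ
          (Finset.univ.filter fun y : Fin n => Sum.inr y ∈ b) := by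
      ext p
      simp [Finset.mem_product]
    rw [this, Finset.card_product]
  -- same-group count, left
  have hsm : (m * m - m) * 3 = (B.map fun b => Lf b * (Lf b - 1)).sum := by
    have hs := swap_count B ((Finset.univ : Finset (Fin m)).offDiag)
      (fun p b => Sum.inl p.1 ∈ b ∧ Sum.inl p.2 ∈ b)
    have hl : ∀ p : Fin m × Fin m, p ∈ (Finset.univ : Finset (Fin m)).offDiag →
        (B.filter (fun b => Sum.inl p.1 ∈ b ∧ Sum.inl p.2 ∈ b)).card = 3 := by
      intro p hp
      rw [Finset.mem_offDiag] at hp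
      exact hsame (Sum.inl p.1) (Sum.inl p.2) (by simp [hp.2.2]) rfl
    rw [Finset.sum_congr rfl hl, Finset.sum_const, smul_eq_mul] at hs
    rw [Finset.offDiag_card, Finset.card_univ, Fintype.card_fin] at hs
    rw [hs]
    congr 1
    apply Multiset.map_congr rfl
    intro b _
    have : ((Finset.univ : Finset (Fin m)).offDiag.filter
        fun p => Sum.inl p.1 ∈ b ∧ Sum.inl p.2 ∈ b)
        = (Finset.univ.filter fun x : Fin m => Sum.inl x ∈ b).offDiag := by
      ext p
      simp only [Finset.mem_filter, Finset.mem_offDiag, Finset.mem_univ, true_and]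
      tauto
    rw [this, Finset.offDiag_card]
    simp [hLf, Nat.mul_sub, Nat.mul_one]
  -- same-group count, right
  have hsn : (n * n - n) * 3 = (B.map fun b => Rf b * (Rf b - 1)).sum := by
    have hs := swap_count B ((Finset.univ : Finset (Fin n)).offDiag)
      (fun p b => Sum.inr p.1 ∈ b ∧ Sum.inr p.2 ∈ b)
    have hl : ∀ p : Fin n × Fin n, p ∈ (Finset.univ : Finset (Fin n)).offDiag →
        (B.filter (fun b => Sum.inr p.1 ∈ b ∧ Sum.inr p.2 ∈ b)).card = 3 := by
      intro p hp
      rw [Finset.mem_offDiag] at hp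
      exact hsame (Sum.inr p.1) (Sum.inr p.2) (by simp [hp.2.2]) rfl
    rw [Finset.sum_congr rfl hl, Finset.sum_const, smul_eq_mul] at hs
    rw [Finset.offDiag_card, Finset.card_univ, Fintype.card_fin] at hs
    rw [hs]
    congr 1
    apply Multiset.map_congr rfl
    intro b _
    have : ((Finset.univ : Finset (Fin n)).offDiag.filter
        fun p => Sum.inr p.1 ∈ b ∧ Sum.inr p.2 ∈ b)
        = (Finset.univ.filter fun y : Fin n => Sum.inr y ∈ b).offDiag := by
      ext p
      simp only [Finset.mem_filter, Finset.mem_offDiag, Finset.mem_univ, true_and]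
      tauto
    rw [this, Finset.offDiag_card]
    simp [hRf, Nat.mul_sub, Nat.mul_one]
  -- per-block: L + R = 3
  have hLR : ∀ b ∈ B, Lf b + Rf b = 3 := by
    intro b hb
    have h1 : b.filter (fun v => v.isLeft = true)
        = (Finset.univ.filter fun x : Fin m => Sum.inl x ∈ b).image Sum.inl := by
      ext v
      cases v <;> simp
    have h2 : b.filter (fun v => ¬ v.isLeft = true)
        = (Finset.univ.filter fun y : Fin n => Sum.inr y ∈ b).image Sum.inr := by
      ext v
      cases v <;> simp [Sum.isLeft]
    have := Finset.card_filter_add_card_filter_not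
      (s := b) (p := fun v => v.isLeft = true)
    rw [h1, h2, Finset.card_image_of_injective _ Sum.inl_injective,
      Finset.card_image_of_injective _ Sum.inr_injective, h3 b hb] at this
    exact this
  -- pointwise inequality
  have hpt : ∀ b ∈ B, 3 * (Lf b * Rf b)
      ≤ Lf b * (Lf b - 1) + Rf b * (Rf b - 1) + 2 * (Lf b * Rf b) := by
    intro b hb
    have h := hLR b hb
    revert h
    generalize Lf b = l
    generalize Rf b = r
    intro h
    have h1 : l ≤ 3 := by omega
    have h2 : r ≤ 3 := by omega
    interval_cases l <;> interval_cases r <;> omega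
  -- combine
  have hineq : (B.map fun b => 3 * (Lf b * Rf b)).sum
      ≤ (B.map fun b => Lf b * (Lf b - 1) + Rf b * (Rf b - 1) + 2 * (Lf b * Rf b)).sum := by
    apply Multiset.sum_map_le_sum_map
    exact hpt
  rw [Multiset.sum_map_add, Multiset.sum_map_add] at hineq
  rw [Multiset.sum_map_mul_left] at hineq
  rw [Multiset.sum_map_mul_left] at hineq
  rw [← hc, ← hsm, ← hsn] at hineq
  have hm1 : m * (m - 1) = m * m - m := by rw [Nat.mul_sub, Nat.mul_one]
  have hn1 : n * (n - 1) = n * n - n := by rw [Nat.mul_sub, Nat.mul_one]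
  have : lam * m * n = m * n * lam := by ring
  rw [this]
  have h3m : 3 * m * (m - 1) = (m * m - m) * 3 := by
    rw [mul_assoc, Nat.mul_sub, mul_one, mul_comm]
  have h3n : 3 * n * (n - 1) = (n * n - n) * 3 := by
    rw [mul_assoc, Nat.mul_sub, mul_one, mul_comm]
  omega
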